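/- arXiv:1809.07040 — 2 statements merged into one kernel-verified Lean document; each statement's English description precedes it below -/
import Mathlib

section
/- Upper bound on the Principal's expected utility (Proposition 3.2, second part): For any admissible contract (W, a) satisfying the participation constraint E[-exp(-γ_A(W - ∫₀ᵀ κ(a_t)dt))] ≥ -exp(-γ_A y₀), one has E[-exp(-γ_P(X_T^a - W))] ≤ -exp(-γ_P(x₀ - y₀)) · exp(γ_P T(-κ̃(1) + γ_P γ_A/(2(γ_A+γ_P)))). -/
open MeasureTheory ProbabilityTheory Real Set

open scoped NNReal ENNReal

lemma quad_cast (b c : ℝ) (x : ℝ) :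
    (-(b:ℂ) * (x:ℂ) ^ 2 + (c:ℂ) * (x:ℂ) + 0) = ((-b * x ^ 2 + c * x : ℝ) : ℂ) := by
  push_cast; ring

lemma integrable_rexp_quad {b : ℝ} (hb : 0 < b) (c : ℝ) :
    Integrable (fun x : ℝ => Real.exp (-b * x ^ 2 + c * x)) := by
  have h := (integrable_cexp_quadratic (b := (b : ℂ)) (by simpa using hb) (c : ℂ) 0).norm
  refine h.congr (Filter.Eventually.of_forall fun x => ?_)
  simp only [quad_cast b c, ← Complex.ofReal_exp, Complex.norm_real, Real.norm_eq_abs,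
    abs_of_pos (Real.exp_pos _)]

lemma integral_rexp_quad {b : ℝ} (hb : 0 < b) (c : ℝ) :
    ∫ x : ℝ, Real.exp (-b * x ^ 2 + c * x)
      = Real.sqrt (π / b) * Real.exp (c ^ 2 / (4 * b)) := by
  have h := integral_cexp_quadratic (b := -(b : ℂ)) (by simpa using hb) (c : ℂ) 0
  simp_rw [neg_neg, quad_cast b c] at h
  rw [show (fun x : ℝ => Complex.exp ((-b * x ^ 2 + c * x : ℝ) : ℂ))
      = fun x : ℝ => ((Real.exp (-b * x ^ 2 + c * x) : ℝ) : ℂ) from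
    funext fun x => (Complex.ofReal_exp _).symm] at h
  have e1 : ((π : ℂ)) / (b : ℂ) = ((π / b : ℝ) : ℂ) := by push_cast; ring
  have e2 : ((0 : ℂ) - (c:ℂ) ^ 2 / (4 * -(b:ℂ))) = ((c ^ 2 / (4 * b) : ℝ) : ℂ) := by
    push_cast; ring
  rw [e1, e2, ← Complex.ofReal_exp, show (1/2 : ℂ) = ((1/2 : ℝ) : ℂ) by norm_num,
    ← Complex.ofReal_cpow (by positivity), ← Complex.ofReal_mul, ← Real.sqrt_eq_rpow] at h
  have h2 := integral_ofReal (𝕜 := ℂ) (f := fun x : ℝ => rexp (-b * x ^ 2 + c * x)) (μ := volume)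
  exact Complex.ofReal_injective (h2.symm.trans h)

lemma gaussianPDF_eq_coe (v : ℝ≥0) :
    gaussianPDF 0 v = fun x => ((gaussianPDFReal 0 v x).toNNReal : ℝ≥0∞) := rfl

lemma pdf_mul_exp (c : ℝ) {v : ℝ≥0} (hv : v ≠ 0) (x : ℝ) :
    gaussianPDFReal 0 v x * Real.exp (c * x)
      = (Real.sqrt (2 * π * v))⁻¹ * Real.exp (-(2 * (v:ℝ))⁻¹ * x ^ 2 + c * x) := by
  have hvr : (0:ℝ) < v := by positivity
  simp only [gaussianPDFReal, sub_zero, mul_assoc, ← Real.exp_add]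
  congr 2
  field_simp

lemma integrable_exp_mul_gaussianReal (c : ℝ) {v : ℝ≥0} (hv : v ≠ 0) :
    Integrable (fun x => Real.exp (c * x)) (gaussianReal 0 v) := by
  have hvr : (0:ℝ) < v := by positivity
  rw [gaussianReal_of_var_ne_zero 0 hv, gaussianPDF_eq_coe,
    integrable_withDensity_iff_integrable_smul ((measurable_gaussianPDFReal 0 v).real_toNNReal)]
  refine ((integrable_rexp_quad (b := (2 * (v:ℝ))⁻¹) (by positivity) c).const_mul
    ((Real.sqrt (2 * π * v))⁻¹)).congr (Filter.Eventually.of_forall fun x => ?_)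
  dsimp only
  rw [NNReal.smul_def, Real.coe_toNNReal _ (gaussianPDFReal_nonneg _ _ _), smul_eq_mul,
    pdf_mul_exp c hv]

lemma integral_exp_mul_gaussianReal (c : ℝ) {v : ℝ≥0} (hv : v ≠ 0) :
    ∫ x, Real.exp (c * x) ∂(gaussianReal 0 v) = Real.exp ((v:ℝ) * c ^ 2 / 2) := by
  have hvr : (0:ℝ) < v := by positivity
  rw [gaussianReal_of_var_ne_zero 0 hv, gaussianPDF_eq_coe,
    integral_withDensity_eq_integral_smul ((measurable_gaussianPDFReal 0 v).real_toNNReal)]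
  have : ∀ x : ℝ, (gaussianPDFReal 0 v x).toNNReal • Real.exp (c * x)
      = (Real.sqrt (2 * π * v))⁻¹ * Real.exp (-(2 * (v:ℝ))⁻¹ * x ^ 2 + c * x) := fun x => by
    rw [NNReal.smul_def, Real.coe_toNNReal _ (gaussianPDFReal_nonneg _ _ _), smul_eq_mul,
      pdf_mul_exp c hv]
  rw [integral_congr_ae (Filter.Eventually.of_forall this), integral_const_mul,
    integral_rexp_quad (by positivity) c]
  rw [show π / (2 * (v:ℝ))⁻¹ = 2 * π * v by field_simp,
    show c ^ 2 / (4 * (2 * (v:ℝ))⁻¹) = (v:ℝ) * c ^ 2 / 2 by field_simp; ring, ← mul_assoc,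
    inv_mul_cancel₀ (by positivity), one_mul]

lemma memLp_exp_of_integrable {Ω : Type*} [MeasurableSpace Ω] {μ : Measure Ω} {h : Ω → ℝ}
    (hm : AEStronglyMeasurable (fun ω => Real.exp (h ω)) μ) {p : ℝ} (hp : 0 < p)
    (hint : Integrable (fun ω => Real.exp (p * h ω)) μ) :
    MemLp (fun ω => Real.exp (h ω)) (ENNReal.ofReal p) μ := by
  have hq0 : ENNReal.ofReal p ≠ 0 := by simp [ENNReal.ofReal_eq_zero, not_le, hp]
  have hqt : ENNReal.ofReal p ≠ ∞ := ENNReal.ofReal_ne_top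
  rw [← memLp_norm_rpow_iff (p := ENNReal.ofReal p) hm hq0 hqt, ENNReal.div_self hq0 hqt,
    memLp_one_iff_integrable]
  refine hint.congr (Filter.Eventually.of_forall fun ω => ?_)
  dsimp only
  rw [Real.norm_eq_abs, abs_of_pos (Real.exp_pos _), ENNReal.toReal_ofReal hp.le,
    ← Real.exp_mul, mul_comm]

/-- Proposition 3.2, second part: upper bound on the Principal's expected utility.
For any admissible contract `(W, a)` satisfying the participation constraint
`E[-exp(-γ_A(W - ∫₀ᵀ κ(a_t)dt))] ≥ -exp(-γ_A y₀)`, one has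
`E[-exp(-γ_P(X_T^a - W))]
  ≤ -exp(-γ_P(x₀ - y₀)) · exp(γ_P T (-κ̃(1) + γ_P γ_A/(2(γ_A+γ_P))))`. -/
theorem principal_utility_upper_bound {Ω : Type*} [MeasurableSpace Ω]
    (μ : Measure Ω) [IsProbabilityMeasure μ]
    (T x₀ y₀ γP γA : ℝ) (hT : 0 < T) (hP : 0 < γP) (hA : 0 < γA)
    (κ : ℝ → ℝ) (hconv : StrictConvexOn ℝ (Set.Ici 0) κ)
    (hcont : ContinuousOn κ (Set.Ici 0)) (hmono : MonotoneOn κ (Set.Ici 0))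
    (ktilde : ℝ) (hkt : IsLUB ((fun x => x - κ x) '' Set.Ici 0) ktilde)
    (B : Ω → ℝ) (hB : Measurable B) (hlaw : μ.map B = gaussianReal 0 T.toNNReal)
    (a : ℝ → Ω → ℝ) (ha0 : ∀ t ω, 0 ≤ a t ω)
    (haint : ∀ ω, IntervalIntegrable (fun t => a t ω) MeasureTheory.volume 0 T)
    (hκint : ∀ ω, IntervalIntegrable (fun t => κ (a t ω)) MeasureTheory.volume 0 T)
    (X : Ω → ℝ) (hX : ∀ ω, X ω = x₀ + (∫ t in (0 : ℝ)..T, a t ω) + B ω)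
    (Kc : Ω → ℝ) (hKc : ∀ ω, Kc ω = ∫ t in (0 : ℝ)..T, κ (a t ω))
    (W : Ω → ℝ) (hWm : Measurable W) (hXm : Measurable X) (hKm : Measurable Kc)
    (hW : ∀ q : ℝ, q ≠ 0 → Integrable (fun ω => Real.exp (q * W ω)) μ)
    (h1 : Integrable (fun ω => Real.exp (-γP * (X ω - W ω))) μ)
    (h2 : Integrable
      (fun ω => |(-Real.exp (-γP * (X ω - Kc ω)))| ^ (γA / (γA + γP))) μ)
    (h3 : Integrable (fun ω => Real.exp (-γA * (W ω - Kc ω))) μ)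
    (hPC : ∫ ω, -Real.exp (-γA * (W ω - Kc ω)) ∂μ ≥ -Real.exp (-γA * y₀)) :
    ∫ ω, -Real.exp (-γP * (X ω - W ω)) ∂μ ≤
      -Real.exp (-γP * (x₀ - y₀)) *
        Real.exp (γP * T * (-ktilde + γP * γA / (2 * (γA + γP)))) := by
  have hAP : 0 < γA + γP := by linarith
  set θ : ℝ := γA / (γA + γP) with hθdef
  have hθ : 0 < θ := by positivity
  have hθ1 : θ < 1 := by rw [hθdef, div_lt_one hAP]; linarith
  set s : ℝ := γP * θ with hsdef
  have hs : 0 < s := by positivity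
  have hvT : T.toNNReal ≠ 0 := by
    simp only [ne_eq, Real.toNNReal_eq_zero, not_le]; exact hT
  -- pointwise bound on X - Kc
  have hXK : ∀ ω, X ω - Kc ω ≤ x₀ + T * ktilde + B ω := by
    intro ω
    rw [hX, hKc]
    have hsub : ∫ t in (0:ℝ)..T, (a t ω - κ (a t ω))
        = (∫ t in (0:ℝ)..T, a t ω) - ∫ t in (0:ℝ)..T, κ (a t ω) :=
      intervalIntegral.integral_sub (haint ω) (hκint ω)
    have hle : ∫ t in (0:ℝ)..T, (a t ω - κ (a t ω)) ≤ ∫ _t in (0:ℝ)..T, ktilde := by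
      refine intervalIntegral.integral_mono_on hT.le ((haint ω).sub (hκint ω))
        (intervalIntegrable_const) fun t ht => ?_
      exact hkt.1 ⟨a t ω, ha0 t ω, rfl⟩
    rw [hsub, intervalIntegral.integral_const] at hle
    simp only [sub_zero, smul_eq_mul] at hle
    linarith
  -- participation constraint
  have hN0 : (0:ℝ) ≤ ∫ ω, Real.exp (-γA * (W ω - Kc ω)) ∂μ :=
    integral_nonneg fun ω => (Real.exp_pos _).le
  have hNle : ∫ ω, Real.exp (-γA * (W ω - Kc ω)) ∂μ ≤ Real.exp (-γA * y₀) := by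
    rw [ge_iff_le, integral_neg, neg_le_neg_iff] at hPC
    exact hPC
  -- integrability and value of exp(-s B)
  have hg0 : AEStronglyMeasurable (fun x : ℝ => Real.exp (-s * x)) (μ.map B) :=
    (Real.measurable_exp.comp (measurable_id.const_mul (-s))).aestronglyMeasurable
  have hBint : Integrable (fun ω => Real.exp (-s * B ω)) μ := by
    refine (integrable_map_measure hg0 hB.aemeasurable).mp ?_
    rw [hlaw]
    exact integrable_exp_mul_gaussianReal (-s) hvT
  have hBval : ∫ ω, Real.exp (-s * B ω) ∂μ = Real.exp (T * s ^ 2 / 2) := by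
    have hm2 : ∫ ω, Real.exp (-s * B ω) ∂μ = ∫ x, Real.exp (-s * x) ∂(μ.map B) :=
      (integral_map hB.aemeasurable hg0).symm
    rw [hm2, hlaw, integral_exp_mul_gaussianReal (-s) hvT, Real.coe_toNNReal T hT.le]
    ring_nf
  -- integrability of exp(-s (X - Kc))
  have hM2 : Integrable (fun ω => Real.exp (-s * (X ω - Kc ω))) μ := by
    refine h2.congr (Filter.Eventually.of_forall fun ω => ?_)
    dsimp only
    rw [abs_neg, abs_of_pos (Real.exp_pos _), ← Real.exp_mul]
    congr 1
    rw [hsdef]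
    ring
  -- lower bound on M
  have hMlb : Real.exp (-s * (x₀ + T * ktilde) + T * s ^ 2 / 2)
      ≤ ∫ ω, Real.exp (-s * (X ω - Kc ω)) ∂μ := by
    have hlhs : Integrable (fun ω => Real.exp (-s * (x₀ + T * ktilde) + -s * B ω)) μ := by
      simp_rw [Real.exp_add]
      exact hBint.const_mul _
    have hcalc : ∫ ω, Real.exp (-s * (x₀ + T * ktilde) + -s * B ω) ∂μ
        = Real.exp (-s * (x₀ + T * ktilde) + T * s ^ 2 / 2) := by
      simp_rw [Real.exp_add, integral_const_mul, hBval]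
    rw [← hcalc]
    refine integral_mono hlhs hM2 fun ω => ?_
    refine Real.exp_le_exp.mpr ?_
    nlinarith [mul_le_mul_of_nonneg_left (hXK ω) hs.le]
  -- Hölder's inequality
  set p : ℝ := (γA + γP) / γA with hpdef
  set q : ℝ := (γA + γP) / γP with hqdef
  have hp0 : 0 < p := by positivity
  have hq0 : 0 < q := by positivity
  have hpq : Real.HolderConjugate p q := by
    rw [Real.holderConjugate_iff]
    constructor
    · rw [hpdef, lt_div_iff₀ hA]; linarith
    · rw [hpdef, hqdef]; field_simp
  have hFm : AEStronglyMeasurable (fun ω => Real.exp (-s * (X ω - W ω))) μ :=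
    (Real.measurable_exp.comp ((hXm.sub hWm).const_mul (-s))).aestronglyMeasurable
  have hGm : AEStronglyMeasurable (fun ω => Real.exp (-s * (W ω - Kc ω))) μ :=
    (Real.measurable_exp.comp ((hWm.sub hKm).const_mul (-s))).aestronglyMeasurable
  have hF : MemLp (fun ω => Real.exp (-s * (X ω - W ω))) (ENNReal.ofReal p) μ := by
    refine memLp_exp_of_integrable hFm hp0 ?_
    refine h1.congr (Filter.Eventually.of_forall fun ω => ?_)
    dsimp only
    congr 1
    rw [hsdef, hpdef, hθdef]
    field_simp
  have hG : MemLp (fun ω => Real.exp (-s * (W ω - Kc ω))) (ENNReal.ofReal q) μ := by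
    refine memLp_exp_of_integrable hGm hq0 ?_
    refine h3.congr (Filter.Eventually.of_forall fun ω => ?_)
    dsimp only
    congr 1
    rw [hsdef, hqdef, hθdef]
    field_simp
  have hHolder := integral_mul_le_Lp_mul_Lq_of_nonneg hpq
    (Filter.Eventually.of_forall fun ω => (Real.exp_pos _).le)
    (Filter.Eventually.of_forall fun ω => (Real.exp_pos _).le) hF hG
  have e1 : ∫ ω, Real.exp (-s * (X ω - W ω)) * Real.exp (-s * (W ω - Kc ω)) ∂μ
      = ∫ ω, Real.exp (-s * (X ω - Kc ω)) ∂μ := by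
    refine integral_congr_ae (Filter.Eventually.of_forall fun ω => ?_)
    dsimp only
    rw [← Real.exp_add]
    congr 1
    ring
  have e2 : ∫ ω, Real.exp (-s * (X ω - W ω)) ^ p ∂μ
      = ∫ ω, Real.exp (-γP * (X ω - W ω)) ∂μ := by
    refine integral_congr_ae (Filter.Eventually.of_forall fun ω => ?_)
    dsimp only
    rw [← Real.exp_mul]
    congr 1
    rw [hsdef, hpdef, hθdef]
    field_simp
  have e3 : ∫ ω, Real.exp (-s * (W ω - Kc ω)) ^ q ∂μ
      = ∫ ω, Real.exp (-γA * (W ω - Kc ω)) ∂μ := by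
    refine integral_congr_ae (Filter.Eventually.of_forall fun ω => ?_)
    dsimp only
    rw [← Real.exp_mul]
    congr 1
    rw [hsdef, hqdef, hθdef]
    field_simp
  rw [e1, e2, e3] at hHolder
  have ep : 1 / p = θ := by rw [hpdef, hθdef, one_div_div]
  have eq' : 1 / q = 1 - θ := by
    rw [hqdef, hθdef, one_div_div]
    field_simp
    ring
  rw [ep, eq'] at hHolder
  set L := ∫ ω, Real.exp (-γP * (X ω - W ω)) ∂μ with hLdef
  set N := ∫ ω, Real.exp (-γA * (W ω - Kc ω)) ∂μ with hNdef
  have hL0 : 0 ≤ L := integral_nonneg fun ω => (Real.exp_pos _).le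
  have hNp : N ^ (1 - θ) ≤ Real.exp (-γA * y₀) ^ (1 - θ) :=
    Real.rpow_le_rpow hN0 hNle (by linarith)
  have hLθ : Real.exp (-s * (x₀ + T * ktilde) + T * s ^ 2 / 2)
      ≤ L ^ θ * Real.exp (-γA * y₀ * (1 - θ)) := by
    rw [Real.exp_mul]
    exact (hMlb.trans hHolder).trans
      (mul_le_mul_of_nonneg_left hNp (Real.rpow_nonneg hL0 θ))
  have hE : Real.exp (-s * (x₀ + T * ktilde) + T * s ^ 2 / 2 - -γA * y₀ * (1 - θ)) ≤ L ^ θ := by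
    rw [Real.exp_sub, div_le_iff₀ (Real.exp_pos _)]
    exact hLθ
  have h4 := Real.rpow_le_rpow (Real.exp_nonneg _) hE (le_of_lt (by positivity : (0:ℝ) < 1 / θ))
  rw [← Real.rpow_mul hL0, mul_one_div, div_self hθ.ne', Real.rpow_one, ← Real.exp_mul] at h4
  rw [integral_neg, ← hLdef, neg_mul, neg_le_neg_iff, ← Real.exp_add]
  refine le_trans (le_of_eq ?_) h4
  congr 1
  rw [hsdef, hθdef]
  field_simp
  ring
end

section
/- Participation constraint for affine wages (Theorem 3.5(i), second part): Let W = (γ_P/(γ_A+γ_P))X_T^{a*} + β with X_T^{a*} = x₀ + Tκ*(1) + B_T, B_T ~ N(0,T). Then E[-exp(-γ_A(W - Tκ(κ*(1))))] ≥ -exp(-γ_A y₀) if and only if β ≥ β*, where β* = T γ_A γ_P²/(2(γ_A+γ_P)²) + y₀ + T κ(κ*(1)) - (γ_P/(γ_A+γ_P))(x₀ + T κ*(1)). -/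
open MeasureTheory ProbabilityTheory Real

open scoped NNReal ENNReal

lemma gaussianPDFReal_mul_exp (v : ℝ≥0) (hv : v ≠ 0) (c x : ℝ) :
    gaussianPDFReal 0 v x * rexp (c * x)
      = rexp (c ^ 2 * v / 2) * gaussianPDFReal (c * v) v x := by
  have hv' : (v : ℝ) ≠ 0 := by exact_mod_cast hv
  simp only [gaussianPDFReal]
  have hexp : rexp (-(x - 0) ^ 2 / (2 * v)) * rexp (c * x)
      = rexp (c ^ 2 * v / 2) * rexp (-(x - c * v) ^ 2 / (2 * v)) := by
    rw [← Real.exp_add, ← Real.exp_add]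
    congr 1
    field_simp
    ring
  rw [mul_assoc, hexp]
  ring

lemma integral_exp_gaussianReal (v : ℝ≥0) (hv : v ≠ 0) (c : ℝ) :
    ∫ x, rexp (c * x) ∂(gaussianReal 0 v) = rexp (c ^ 2 * v / 2) := by
  rw [gaussianReal_of_var_ne_zero _ hv]
  have hpdf : gaussianPDF 0 v = fun x ↦ ((gaussianPDFReal 0 v x).toNNReal : ℝ≥0∞) := rfl
  rw [hpdf, integral_withDensity_eq_integral_smul
    ((measurable_gaussianPDFReal 0 v).real_toNNReal) (fun x ↦ rexp (c * x))]
  have : ∀ x : ℝ, (gaussianPDFReal 0 v x).toNNReal • rexp (c * x)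
      = rexp (c ^ 2 * v / 2) * gaussianPDFReal (c * v) v x := by
    intro x
    rw [NNReal.smul_def, smul_eq_mul, Real.coe_toNNReal _ (gaussianPDFReal_nonneg 0 v x),
      gaussianPDFReal_mul_exp v hv c x]
  simp_rw [this]
  rw [integral_const_mul, integral_gaussianPDFReal_eq_one _ hv, mul_one]

/-- Theorem 3.5(i), second part: for the affine wage
`W = (γ_P/(γ_A+γ_P)) X_T^{a*} + β` with `X_T^{a*} = x₀ + T κ*(1) + B_T`, `B_T ~ N(0,T)`,
the participation constraint `E[-exp(-γ_A(W - Tκ(κ*(1))))] ≥ -exp(-γ_A y₀)` holds iff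
`β ≥ β* := T γ_A γ_P²/(2(γ_A+γ_P)²) + y₀ + T κ(κ*(1)) - (γ_P/(γ_A+γ_P))(x₀ + T κ*(1))`. -/
theorem participation_constraint_affine {Ω : Type*} [MeasurableSpace Ω]
    (μ : Measure Ω) [IsProbabilityMeasure μ]
    (T x₀ y₀ γP γA κs1 β : ℝ) (hT : 0 < T) (hP : 0 < γP) (hA : 0 < γA)
    (κ : ℝ → ℝ)
    (B : Ω → ℝ) (hB : Measurable B) (hlaw : μ.map B = gaussianReal 0 T.toNNReal)
    (X W : Ω → ℝ) (hX : ∀ ω, X ω = x₀ + T * κs1 + B ω)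
    (hW : ∀ ω, W ω = γP / (γA + γP) * X ω + β) :
    (∫ ω, -Real.exp (-γA * (W ω - T * κ κs1)) ∂μ ≥ -Real.exp (-γA * y₀)) ↔
      β ≥ T * γA * γP ^ 2 / (2 * (γA + γP) ^ 2) + y₀ + T * κ κs1 -
        γP / (γA + γP) * (x₀ + T * κs1) := by
  have hAP : γA + γP ≠ 0 := by positivity
  set l : ℝ := -(γA * (γP / (γA + γP))) with hl
  set C : ℝ := -γA * (γP / (γA + γP) * (x₀ + T * κs1) + β - T * κ κs1) with hC
  have hpt : ∀ ω, -Real.exp (-γA * (W ω - T * κ κs1))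
      = -(Real.exp C * Real.exp (l * B ω)) := by
    intro ω
    rw [← Real.exp_add]
    congr 1
    rw [hW, hX, hC, hl]
    ring
  have hTnn : ((T.toNNReal : ℝ≥0) : ℝ) = T := Real.coe_toNNReal T hT.le
  have hTne : T.toNNReal ≠ 0 := by
    simp only [ne_eq, Real.toNNReal_eq_zero, not_le]; exact hT
  have hint : ∫ ω, Real.exp (l * B ω) ∂μ = Real.exp (l ^ 2 * T / 2) := by
    have h1 : ∫ ω, Real.exp (l * B ω) ∂μ
        = ∫ x, Real.exp (l * x) ∂(μ.map B) := by
      rw [integral_map hB.aemeasurable]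
      exact (measurable_const.mul measurable_id).exp.aestronglyMeasurable
    rw [h1, hlaw, integral_exp_gaussianReal _ hTne, hTnn]
  have hI : ∫ ω, -Real.exp (-γA * (W ω - T * κ κs1)) ∂μ
      = -(Real.exp C * Real.exp (l ^ 2 * T / 2)) := by
    simp_rw [hpt]
    rw [integral_neg, integral_const_mul, hint]
  rw [hI, ge_iff_le, neg_le_neg_iff, ← Real.exp_add, Real.exp_le_exp]
  have key : C + l ^ 2 * T / 2 = -γA * y₀
      + γA * ((T * γA * γP ^ 2 / (2 * (γA + γP) ^ 2) + y₀ + T * κ κs1 -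
        γP / (γA + γP) * (x₀ + T * κs1)) - β) := by
    rw [hC, hl]
    field_simp
    ring
  rw [key]
  constructor
  · intro h
    nlinarith
  · intro h
    nlinarith
end
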